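/- Let f ∈ ℝ[x,y]_d be a nonzero binary form. Then the real Waring rank of f equals the least integer m such that the degree-m graded piece (f^⊥)_m of the apolar ideal contains a nonzero form all of whose roots (in ℙ^1) are real and distinct, i.e., a form that factors as a product of m pairwise non-proportional real linear forms. -/

import Mathlib

open MvPolynomial

noncomputable def diffOp (h f : MvPolynomial (Fin 2) ℝ) : MvPolynomial (Fin 2) ℝ :=
  ∑ e ∈ h.support, (MvPolynomial.coeff e h) •
    ((fun p => pderiv (0 : Fin 2) p)^[e 0] ((fun p => pderiv (1 : Fin 2) p)^[e 1] f))

noncomputable def lin (a b : ℝ) : MvPolynomial (Fin 2) ℝ := a • X 0 + b • X 1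

noncomputable def toForm (m : ℕ) (a : Fin (m + 1) → ℝ) : MvPolynomial (Fin 2) ℝ :=
  ∑ i : Fin (m + 1), a i • (X 0 ^ (i : ℕ) * X 1 ^ (m - (i : ℕ)))

def hasWaringDecomp (d r : ℕ) (f : MvPolynomial (Fin 2) ℝ) : Prop :=
  ∃ c a b : Fin r → ℝ, f = ∑ i, c i • (lin (a i) (b i)) ^ d

noncomputable def waringRank (d : ℕ) (f : MvPolynomial (Fin 2) ℝ) : ℕ :=
  sInf {r | hasWaringDecomp d r f}


noncomputable def Phi (j k : ℕ) : MvPolynomial (Fin 2) ℝ →ₗ[ℝ] MvPolynomial (Fin 2) ℝ :=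
  ((pderiv (0 : Fin 2) : Derivation ℝ _ _).toLinearMap ^ j) *
    ((pderiv (1 : Fin 2) : Derivation ℝ _ _).toLinearMap ^ k)

lemma Phi_apply (j k : ℕ) (f : MvPolynomial (Fin 2) ℝ) :
    Phi j k f = (fun p => pderiv (0 : Fin 2) p)^[j] ((fun p => pderiv (1 : Fin 2) p)^[k] f) := by
  simp [Phi, Module.End.mul_apply, Module.End.pow_apply]

lemma diffOp_eq (h f : MvPolynomial (Fin 2) ℝ) :
    diffOp h f = ∑ e ∈ h.support, (coeff e h) • Phi (e 0) (e 1) f := by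
  simp [diffOp, Phi_apply]

lemma diffOp_eq_superset {h f : MvPolynomial (Fin 2) ℝ} {s : Finset (Fin 2 →₀ ℕ)}
    (hs : h.support ⊆ s) :
    diffOp h f = ∑ e ∈ s, (coeff e h) • Phi (e 0) (e 1) f := by
  rw [diffOp_eq]
  exact Finset.sum_subset hs (fun e _ he => by
    rw [MvPolynomial.notMem_support_iff] at he; simp [he])

lemma diffOp_add_left (h₁ h₂ f : MvPolynomial (Fin 2) ℝ) :
    diffOp (h₁ + h₂) f = diffOp h₁ f + diffOp h₂ f := by
  rw [diffOp_eq_superset (s := h₁.support ∪ h₂.support)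
    (MvPolynomial.support_add ..),
    diffOp_eq_superset (s := h₁.support ∪ h₂.support) Finset.subset_union_left,
    diffOp_eq_superset (s := h₁.support ∪ h₂.support) Finset.subset_union_right,
    ← Finset.sum_add_distrib]
  exact Finset.sum_congr rfl fun e _ => by rw [coeff_add, add_smul]

lemma diffOp_smul_left (c : ℝ) (h f : MvPolynomial (Fin 2) ℝ) :
    diffOp (c • h) f = c • diffOp h f := by
  rw [diffOp_eq_superset (s := h.support) (MvPolynomial.support_smul), diffOp_eq,
    Finset.smul_sum]
  exact Finset.sum_congr rfl fun e _ => by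
    rw [MvPolynomial.coeff_smul, smul_assoc]

lemma diffOp_monomial (e : Fin 2 →₀ ℕ) (c : ℝ) (f : MvPolynomial (Fin 2) ℝ) :
    diffOp (monomial e c) f = c • Phi (e 0) (e 1) f := by
  rcases eq_or_ne c 0 with rfl | hc
  · simp [diffOp_eq, MvPolynomial.support_monomial]
  · rw [diffOp_eq]
    rw [MvPolynomial.support_monomial, if_neg hc, Finset.sum_singleton,
      MvPolynomial.coeff_monomial, if_pos rfl]

lemma diffOp_add_right (h f₁ f₂ : MvPolynomial (Fin 2) ℝ) :
    diffOp h (f₁ + f₂) = diffOp h f₁ + diffOp h f₂ := by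
  simp [diffOp_eq, Finset.sum_add_distrib]

lemma diffOp_smul_right (h : MvPolynomial (Fin 2) ℝ) (c : ℝ) (f : MvPolynomial (Fin 2) ℝ) :
    diffOp h (c • f) = c • diffOp h f := by
  simp only [diffOp_eq, map_smul, Finset.smul_sum, smul_comm c]

lemma diffOp_zero_right (h : MvPolynomial (Fin 2) ℝ) : diffOp h 0 = 0 := by
  simp [diffOp_eq]

lemma diffOp_one (f : MvPolynomial (Fin 2) ℝ) : diffOp 1 f = f := by
  have : (1 : MvPolynomial (Fin 2) ℝ) = monomial 0 1 := by
    simp [MvPolynomial.monomial_zero']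
  rw [this, diffOp_monomial]
  simp [Phi_apply]

lemma pderiv_comm' (f : MvPolynomial (Fin 2) ℝ) :
    pderiv (0 : Fin 2) (pderiv (1 : Fin 2) f) = pderiv (1 : Fin 2) (pderiv (0 : Fin 2) f) := by
  induction f using MvPolynomial.induction_on' with
  | monomial s a =>
      simp only [pderiv_monomial, Finsupp.tsub_apply]
      rw [tsub_right_comm]
      norm_num [Finsupp.single_apply]
      ring_nf
  | add p q hp hq => simp [hp, hq]

lemma commute_pd :
    Commute ((pderiv (0 : Fin 2) : Derivation ℝ _ _).toLinearMap)
      ((pderiv (1 : Fin 2) : Derivation ℝ _ (MvPolynomial (Fin 2) ℝ)).toLinearMap) := by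
  apply LinearMap.ext
  intro f
  exact pderiv_comm' f

lemma Phi_mul (j k j' k' : ℕ) :
    Phi (j + j') (k + k') = Phi j k * Phi j' k' := by
  unfold Phi
  rw [pow_add, pow_add, (commute_pd.pow_pow j' k).mul_mul_mul_comm]

lemma diffOp_mul (g h f : MvPolynomial (Fin 2) ℝ) :
    diffOp (g * h) f = diffOp g (diffOp h f) := by
  induction g using MvPolynomial.induction_on' with
  | add p q hp hq => rw [add_mul, diffOp_add_left, diffOp_add_left, hp, hq]
  | monomial e c =>
    induction h using MvPolynomial.induction_on' with
    | add p q hp hq =>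
        rw [mul_add, diffOp_add_left, hp, hq, diffOp_add_left p q f, diffOp_add_right]
    | monomial e' c' =>
        rw [MvPolynomial.monomial_mul, diffOp_monomial, diffOp_monomial, diffOp_monomial,
          Finsupp.add_apply, Finsupp.add_apply, Phi_mul]
        simp [Module.End.mul_apply, mul_smul, smul_comm c' c]

lemma smul_X_eq (a : ℝ) (i : Fin 2) :
    (a • X i : MvPolynomial (Fin 2) ℝ) = monomial (Finsupp.single i 1) a := by
  rw [MvPolynomial.X, MvPolynomial.smul_monomial, smul_eq_mul, mul_one]

lemma diffOp_lin (a b : ℝ) (f : MvPolynomial (Fin 2) ℝ) :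
    diffOp (lin a b) f = a • pderiv (0 : Fin 2) f + b • pderiv (1 : Fin 2) f := by
  rw [lin, diffOp_add_left, smul_X_eq, smul_X_eq, diffOp_monomial, diffOp_monomial]
  rw [show (Finsupp.single (0 : Fin 2) 1) 0 = 1 by simp,
    show (Finsupp.single (0 : Fin 2) 1) 1 = 0 by simp,
    show (Finsupp.single (1 : Fin 2) 1) 0 = 0 by simp,
    show (Finsupp.single (1 : Fin 2) 1) 1 = 1 by simp]
  congr 2

lemma pderiv_lin (α β : ℝ) :
    pderiv (0 : Fin 2) (lin α β) = C α ∧ pderiv (1 : Fin 2) (lin α β) = C β := by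
  constructor <;>
  · rw [lin]
    simp [MvPolynomial.smul_eq_C_mul]

lemma diffOp_lin_pow (a b α β : ℝ) (n : ℕ) :
    diffOp (lin a b) ((lin α β) ^ n) =
      ((n : ℝ) * (a * α + b * β)) • (lin α β) ^ (n - 1) := by
  rw [diffOp_lin, pderiv_pow, pderiv_pow, (pderiv_lin α β).1, (pderiv_lin α β).2]
  rw [MvPolynomial.smul_eq_C_mul, MvPolynomial.smul_eq_C_mul, MvPolynomial.smul_eq_C_mul]
  simp only [map_add, map_mul, map_natCast]
  ring

lemma deg2 (e : Fin 2 →₀ ℕ) : e.degree = e 0 + e 1 := by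
  rw [Finsupp.degree_apply, Finset.sum_subset (Finset.subset_univ _)
    (fun i _ hi => Finsupp.notMem_support_iff.mp hi), Fin.sum_univ_two]

lemma isHomog_degree {f : MvPolynomial (Fin 2) ℝ} {n : ℕ} (hf : f.IsHomogeneous n)
    {e : Fin 2 →₀ ℕ} (he : coeff e f ≠ 0) : e 0 + e 1 = n := by
  rw [← deg2, Finsupp.degree_eq_weight_one]
  exact hf he

lemma isHomog_pderiv {f : MvPolynomial (Fin 2) ℝ} {n : ℕ} (hf : f.IsHomogeneous n)
    (i : Fin 2) : (pderiv i f).IsHomogeneous (n - 1) := by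
  nth_rewrite 1 [f.as_sum]
  rw [map_sum]
  apply MvPolynomial.IsHomogeneous.sum
  intro e he
  rw [pderiv_monomial]
  rcases Nat.eq_zero_or_pos (e i) with h0 | hpos
  · rw [h0]
    simpa using MvPolynomial.isHomogeneous_zero (Fin 2) ℝ (n - 1)
  · apply MvPolynomial.isHomogeneous_monomial
    have hd : e 0 + e 1 = n := isHomog_degree hf (MvPolynomial.mem_support_iff.mp he)
    rw [deg2, Finsupp.tsub_apply, Finsupp.tsub_apply]
    by_cases hi : i = 0
    · subst hi
      simp [Finsupp.single_apply]
      omega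
    · have hi1 : i = 1 := by
        have := i.isLt
        rw [Fin.ext_iff] at hi ⊢
        omega
      subst hi1
      simp [Finsupp.single_apply]
      omega

lemma euler {f : MvPolynomial (Fin 2) ℝ} {n : ℕ} (hf : f.IsHomogeneous n) :
    X 0 * pderiv (0 : Fin 2) f + X 1 * pderiv (1 : Fin 2) f = (n : ℝ) • f := by
  conv_lhs => rw [f.as_sum]
  conv_rhs => rw [f.as_sum]
  rw [map_sum, map_sum, Finset.mul_sum, Finset.mul_sum, Finset.smul_sum, ← Finset.sum_add_distrib]
  apply Finset.sum_congr rfl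
  intro e he
  have hd : e 0 + e 1 = n := isHomog_degree hf (MvPolynomial.mem_support_iff.mp he)
  have key : ∀ i : Fin 2, X i * pderiv i (monomial e (coeff e f))
      = monomial e (coeff e f * e i) := by
    intro i
    rw [pderiv_monomial]
    rcases Nat.eq_zero_or_pos (e i) with h0 | hpos
    · rw [h0]; simp
    · have : e - Finsupp.single i 1 + Finsupp.single i 1 = e :=
        tsub_add_cancel_of_le (Finsupp.single_le_iff.mpr hpos)
      rw [← this, MvPolynomial.monomial_add_single, pow_one]
      ring_nf
      rw [this]
  rw [key 0, key 1, MvPolynomial.smul_monomial, ← map_add]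
  congr 1
  push_cast [← hd, smul_eq_mul]
  ring

lemma isHomog_zero_eq_C {f : MvPolynomial (Fin 2) ℝ} (hf : f.IsHomogeneous 0) :
    f = C (coeff 0 f) := by
  apply MvPolynomial.ext
  intro m
  rcases eq_or_ne m 0 with rfl | hm
  · simp
  · rw [hf.coeff_eq_zero (by rwa [ne_eq, Finsupp.degree_eq_zero_iff]), MvPolynomial.coeff_C,
      if_neg (by exact fun h => hm h.symm)]

lemma cancel_C {m : ℝ} (hm : m ≠ 0) {f g : MvPolynomial (Fin 2) ℝ} (h : C m * f = g) :
    f = C m⁻¹ * g := by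
  rw [← h, ← mul_assoc, ← map_mul, inv_mul_cancel₀ hm, MvPolynomial.C_1, one_mul]

lemma geom (n : ℕ) (f : MvPolynomial (Fin 2) ℝ) (a b : ℝ) (hab : ¬(a = 0 ∧ b = 0))
    (hf : f.IsHomogeneous n)
    (hE : a • pderiv (0 : Fin 2) f + b • pderiv (1 : Fin 2) f = 0) :
    ∃ c : ℝ, f = c • (lin b (-a)) ^ n := by
  induction n generalizing f with
  | zero =>
    refine ⟨coeff 0 f, ?_⟩
    rw [pow_zero, MvPolynomial.smul_eq_C_mul, mul_one]
    exact isHomog_zero_eq_C hf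
  | succ n ih =>
    set k : ℝ := ((n + 1 : ℕ) : ℝ) with hk
    have hk0 : k ≠ 0 := by positivity
    have h1 : C k * f = X 0 * pderiv (0:Fin 2) f + X 1 * pderiv (1:Fin 2) f := by
      rw [← MvPolynomial.smul_eq_C_mul, hk]
      exact (euler hf).symm
    have hE' : C a * pderiv (0:Fin 2) f + C b * pderiv (1:Fin 2) f = 0 := by
      rw [← MvPolynomial.smul_eq_C_mul, ← MvPolynomial.smul_eq_C_mul]
      exact hE
    have hlin : lin b (-a) = C b * X 0 - C a * X 1 := by
      rw [lin, MvPolynomial.smul_eq_C_mul, MvPolynomial.smul_eq_C_mul, map_neg]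
      ring
    rcases not_and_or.mp hab with ha | hb
    · -- a ≠ 0 : use p1 = pderiv 1 f
      have hp1 : (pderiv (1:Fin 2) f).IsHomogeneous n := by
        simpa using isHomog_pderiv hf 1
      have hg : a • pderiv (0:Fin 2) (pderiv (1:Fin 2) f)
          + b • pderiv (1:Fin 2) (pderiv (1:Fin 2) f) = 0 := by
        have := congrArg (fun p => pderiv (1:Fin 2) p) hE
        simpa [pderiv_comm'] using this
      obtain ⟨c', hc'⟩ := ih _ hp1 hg
      have key : C a * (C k * f) = - (lin b (-a) * pderiv (1:Fin 2) f) := by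
        rw [h1, hlin]
        linear_combination (X 0 : MvPolynomial (Fin 2) ℝ) * hE'
      rw [hc', MvPolynomial.smul_eq_C_mul] at key
      refine ⟨(a * k)⁻¹ * (-c'), ?_⟩
      have : C (a * k) * f = C (-c') * (lin b (-a)) ^ (n + 1) := by
        rw [map_mul, mul_assoc, key, map_neg]
        ring
      have := cancel_C (mul_ne_zero ha hk0) this
      rw [this, MvPolynomial.smul_eq_C_mul, ← mul_assoc, ← map_mul]
    · -- b ≠ 0 : use p0 = pderiv 0 f
      have hp0 : (pderiv (0:Fin 2) f).IsHomogeneous n := by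
        simpa using isHomog_pderiv hf 0
      have hg : a • pderiv (0:Fin 2) (pderiv (0:Fin 2) f)
          + b • pderiv (1:Fin 2) (pderiv (0:Fin 2) f) = 0 := by
        have := congrArg (fun p => pderiv (0:Fin 2) p) hE
        simpa [pderiv_comm'] using this
      obtain ⟨c', hc'⟩ := ih _ hp0 hg
      have key : C b * (C k * f) = lin b (-a) * pderiv (0:Fin 2) f := by
        rw [h1, hlin]
        linear_combination (X 1 : MvPolynomial (Fin 2) ℝ) * hE'
      rw [hc', MvPolynomial.smul_eq_C_mul] at key
      refine ⟨(b * k)⁻¹ * c', ?_⟩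
      have : C (b * k) * f = C c' * (lin b (-a)) ^ (n + 1) := by
        rw [map_mul, mul_assoc, key]
        ring
      have := cancel_C (mul_ne_zero hb hk0) this
      rw [this, MvPolynomial.smul_eq_C_mul, ← mul_assoc, ← map_mul]

lemma diffOp_sub_right (h f g : MvPolynomial (Fin 2) ℝ) :
    diffOp h (f - g) = diffOp h f - diffOp h g := by
  rw [sub_eq_add_neg, diffOp_add_right, ← neg_one_smul ℝ g, diffOp_smul_right,
    neg_one_smul, sub_eq_add_neg]

lemma lin_isHomog (α β : ℝ) : (lin α β).IsHomogeneous 1 := by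
  rw [lin, MvPolynomial.smul_eq_C_mul, MvPolynomial.smul_eq_C_mul]
  exact (MvPolynomial.isHomogeneous_C_mul_X α 0).add (MvPolynomial.isHomogeneous_C_mul_X β 1)

lemma lin_pow_isHomog (α β : ℝ) (n : ℕ) : ((lin α β) ^ n).IsHomogeneous n := by
  simpa using (lin_isHomog α β).pow n

lemma apolar_decomp (m : ℕ) : ∀ (d : ℕ) (f : MvPolynomial (Fin 2) ℝ) (a b : Fin m → ℝ),
    (∀ i, ¬(a i = 0 ∧ b i = 0)) → (∀ i j, i ≠ j → a i * b j ≠ a j * b i) →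
    f.IsHomogeneous d → diffOp (∏ i, lin (a i) (b i)) f = 0 →
    ∃ c : Fin m → ℝ, f = ∑ i, c i • (lin (b i) (-(a i))) ^ d := by
  induction m with
  | zero =>
    intro d f a b _ _ _ h0
    refine ⟨fun i => 0, ?_⟩
    simpa [diffOp_one] using h0
  | succ m ih =>
    intro d f a b hnz hnp hf h0
    rcases Nat.eq_zero_or_pos d with rfl | hd
    · refine ⟨fun i => if i = 0 then coeff 0 f else 0, ?_⟩
      rw [isHomog_zero_eq_C hf]
      simp [Finset.sum_ite_eq', MvPolynomial.smul_eq_C_mul]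
    · obtain ⟨e, rfl⟩ : ∃ e, d = e + 1 := ⟨d - 1, (Nat.succ_pred_eq_of_pos hd).symm⟩
      set al := a (Fin.last m)
      set bl := b (Fin.last m)
      rw [Fin.prod_univ_castSucc, diffOp_mul] at h0
      set g := diffOp (lin al bl) f with hgdef
      have hg : g = al • pderiv (0:Fin 2) f + bl • pderiv (1:Fin 2) f := diffOp_lin al bl f
      have hghom : g.IsHomogeneous e := by
        rw [hg, MvPolynomial.smul_eq_C_mul, MvPolynomial.smul_eq_C_mul]
        have h1 := ((isHomog_pderiv hf 0).C_mul al)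
        have h2 := ((isHomog_pderiv hf 1).C_mul bl)
        simpa using h1.add h2
      obtain ⟨c, hc⟩ := ih e g (fun i => a i.castSucc) (fun i => b i.castSucc)
        (fun i => hnz _) (fun i j hij => hnp _ _ (fun hEq => hij (Fin.castSucc_injective _ hEq)))
        hghom h0
      -- denominators
      have hD : ∀ i : Fin m, al * b i.castSucc - bl * a i.castSucc ≠ 0 := by
        intro i hzero
        exact hnp (Fin.last m) i.castSucc (Fin.ne_last_of_lt (Fin.castSucc_lt_last i)).symm
          (by linarith [sub_eq_zero.mp hzero])
      set D : Fin m → ℝ := fun i => ((e+1 : ℕ) : ℝ) * (al * b i.castSucc - bl * a i.castSucc)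
        with hDdef
      have hD0 : ∀ i, D i ≠ 0 := fun i =>
        mul_ne_zero (by positivity) (hD i)
      set f₀ : MvPolynomial (Fin 2) ℝ :=
        ∑ i : Fin m, ((c i / D i) • (lin (b i.castSucc) (-(a i.castSucc))) ^ (e+1)) with hf₀
      have hdf₀ : diffOp (lin al bl) f₀ = g := by
        rw [hf₀]
        have : ∀ i : Fin m, diffOp (lin al bl)
            ((c i / D i) • (lin (b i.castSucc) (-(a i.castSucc))) ^ (e+1))
            = c i • (lin (b i.castSucc) (-(a i.castSucc))) ^ e := by
          intro i
          rw [diffOp_smul_right, diffOp_lin_pow, smul_smul]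
          congr 1
          · rw [div_mul_eq_mul_div, div_eq_iff (hD0 i)]
            simp only [hDdef]
            push_cast
            ring
        calc diffOp (lin al bl) (∑ i : Fin m, (c i / D i) •
              (lin (b i.castSucc) (-(a i.castSucc))) ^ (e+1))
            = ∑ i : Fin m, diffOp (lin al bl) ((c i / D i) •
              (lin (b i.castSucc) (-(a i.castSucc))) ^ (e+1)) := by
              induction (Finset.univ : Finset (Fin m)) using Finset.induction with
              | empty => simp [diffOp_zero_right]
              | @insert x s hx ih2 => rw [Finset.sum_insert hx, Finset.sum_insert hx,
                  diffOp_add_right, ih2]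
          _ = ∑ i : Fin m, c i • (lin (b i.castSucc) (-(a i.castSucc))) ^ e :=
              Finset.sum_congr rfl fun i _ => this i
          _ = g := hc.symm
      have hsub : diffOp (lin al bl) (f - f₀) = 0 := by
        rw [diffOp_sub_right, ← hgdef, hdf₀, sub_self]
      have hsubhom : (f - f₀).IsHomogeneous (e+1) := by
        apply hf.sub
        apply MvPolynomial.IsHomogeneous.sum
        intro i _
        rw [MvPolynomial.smul_eq_C_mul]
        exact (lin_pow_isHomog _ _ _).C_mul _
      rw [diffOp_lin] at hsub
      obtain ⟨cl, hcl⟩ := geom (e+1) (f - f₀) al bl (hnz (Fin.last m)) hsubhom hsub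
      refine ⟨Fin.snoc (fun i => c i / D i) cl, ?_⟩
      rw [Fin.sum_univ_castSucc]
      simp only [Fin.snoc_castSucc, Fin.snoc_last]
      rw [← hf₀]
      have : f = f₀ + (f - f₀) := by ring
      rw [this, hcl]

lemma diffOp_sum_right (h : MvPolynomial (Fin 2) ℝ) {ι : Type*} [DecidableEq ι] (s : Finset ι)
    (F : ι → MvPolynomial (Fin 2) ℝ) :
    diffOp h (∑ i ∈ s, F i) = ∑ i ∈ s, diffOp h (F i) := by
  induction s using Finset.induction with
  | empty => simp [diffOp_zero_right]
  | @insert x s hx ih => rw [Finset.sum_insert hx, Finset.sum_insert hx, diffOp_add_right, ih]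

lemma kill (m : ℕ) : ∀ (n : ℕ) (f : MvPolynomial (Fin 2) ℝ) (a b : Fin m → ℝ),
    f.IsHomogeneous n → n < m → diffOp (∏ i, lin (a i) (b i)) f = 0 := by
  induction m with
  | zero => intro n f a b _ h; omega
  | succ m ih =>
    intro n f a b hf hn
    rw [Fin.prod_univ_castSucc, diffOp_mul, diffOp_lin]
    rcases Nat.eq_zero_or_pos n with rfl | hpos
    · rw [isHomog_zero_eq_C hf]
      simp only [pderiv_C, smul_zero, add_zero, zero_add]
      exact diffOp_zero_right _
    · obtain ⟨e, rfl⟩ : ∃ e, n = e + 1 := ⟨n - 1, (Nat.succ_pred_eq_of_pos hpos).symm⟩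
      apply ih
      · have h1 := (isHomog_pderiv hf 0).C_mul (a (Fin.last m))
        have h2 := (isHomog_pderiv hf 1).C_mul (b (Fin.last m))
        rw [MvPolynomial.smul_eq_C_mul, MvPolynomial.smul_eq_C_mul]
        simpa using h1.add h2
      · omega

lemma ann (m d : ℕ) (c α β : Fin m → ℝ) :
    diffOp (∏ i, lin (β i) (-(α i))) (∑ i, c i • (lin (α i) (β i)) ^ d) = 0 := by
  rw [diffOp_sum_right]
  apply Finset.sum_eq_zero
  intro i _
  rw [diffOp_smul_right, ← Finset.prod_erase_mul Finset.univ _ (Finset.mem_univ i),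
    diffOp_mul, diffOp_lin_pow]
  rw [show β i * α i + -α i * β i = 0 by ring, mul_zero, zero_smul, diffOp_zero_right,
    smul_zero]

lemma lin_smul (t α β : ℝ) : lin (t * α) (t * β) = t • lin α β := by
  rw [lin, lin, smul_add, mul_smul, mul_smul]

lemma reduce (d : ℕ) (hd : 1 ≤ d) : ∀ (r : ℕ) (f : MvPolynomial (Fin 2) ℝ),
    hasWaringDecomp d r f →
    ∃ (m : ℕ), m ≤ r ∧ ∃ (c α β : Fin m → ℝ),
      (∀ i, ¬(α i = 0 ∧ β i = 0)) ∧ (∀ i j, i ≠ j → α i * β j ≠ α j * β i) ∧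
      f = ∑ i, c i • (lin (α i) (β i)) ^ d := by
  intro r
  induction r with
  | zero =>
    intro f ⟨c, a, b, hsum⟩
    exact ⟨0, le_refl 0, c, a, b, fun i => i.elim0, fun i => i.elim0, hsum⟩
  | succ n ih =>
    intro f ⟨c, a, b, hsum⟩
    by_cases hex : ∃ i, a i = 0 ∧ b i = 0
    · obtain ⟨i, hi0, hi1⟩ := hex
      have hz : (lin (a i) (b i)) ^ d = 0 := by
        rw [hi0, hi1, lin]
        simp only [zero_smul, add_zero]
        exact zero_pow (by omega)
      have : f = ∑ j : Fin n, (c (i.succAbove j)) •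
          (lin (a (i.succAbove j)) (b (i.succAbove j))) ^ d := by
        rw [hsum, Fin.sum_univ_succAbove _ i, hz, smul_zero, zero_add]
      obtain ⟨m, hm, rest⟩ := ih f ⟨_, _, _, this⟩
      exact ⟨m, le_trans hm (Nat.le_succ n), rest⟩
    · push_neg at hex
      by_cases hprop : ∃ i j, i ≠ j ∧ a i * b j = a j * b i
      · obtain ⟨i, j, hij, hp⟩ := hprop
        -- line i is t times line j
        have hT : ∃ t : ℝ, a i = t * a j ∧ b i = t * b j := by
          rcases eq_or_ne (a j) 0 with haj | haj
          · have hbj : b j ≠ 0 := fun h => hex j haj h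
            refine ⟨b i / b j, ?_, ?_⟩
            · rw [haj] at hp ⊢
              rw [mul_zero]
              rcases mul_eq_zero.mp (by linarith : a i * b j = 0) with h | h
              · exact h
              · exact absurd h hbj
            · field_simp
          · refine ⟨a i / a j, by field_simp, ?_⟩
            rw [div_mul_eq_mul_div, eq_div_iff haj]
            linarith
        obtain ⟨t, hta, htb⟩ := hT
        obtain ⟨j₀, hj₀⟩ := Fin.exists_succAbove_eq (Ne.symm hij)
        set P : Fin n → MvPolynomial (Fin 2) ℝ :=
          fun k => (lin (a (i.succAbove k)) (b (i.succAbove k))) ^ d with hP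
        set c'' : Fin n → ℝ :=
          fun k => if k = j₀ then c (i.succAbove k) + c i * t ^ d else c (i.succAbove k)
          with hc''
        have hnew : f = ∑ k : Fin n, c'' k • P k := by
          have hsplit : ∀ k : Fin n, c'' k • P k
              = c (i.succAbove k) • P k + (if k = j₀ then (c i * t ^ d) • P k else 0) := by
            intro k
            simp only [hc'']
            by_cases hk : k = j₀
            · rw [if_pos hk, if_pos hk, add_smul]
            · rw [if_neg hk, if_neg hk, add_zero]
          rw [Finset.sum_congr rfl (fun k _ => hsplit k), Finset.sum_add_distrib,
            Finset.sum_ite_eq' Finset.univ j₀, if_pos (Finset.mem_univ j₀)]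
          have hFi : c i • (lin (a i) (b i)) ^ d = (c i * t ^ d) • P j₀ := by
            rw [hta, htb, lin_smul, smul_pow, smul_smul]
            simp only [hP, hj₀]
          rw [hsum, Fin.sum_univ_succAbove _ i, hFi, add_comm]
        obtain ⟨m, hm, rest⟩ := ih f ⟨c'', _, _, hnew⟩
        exact ⟨m, le_trans hm (Nat.le_succ n), rest⟩
      · push_neg at hprop
        exact ⟨n + 1, le_refl _, c, a, b, fun i h => hex i h.1 h.2, hprop, hsum⟩

/-- Sylvester: the real Waring rank of a nonzero binary form f of degree d is
the least m such that (f^⊥)_m contains a product of m pairwise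
non-proportional real linear forms. -/
theorem stmt_5 (d : ℕ) (f : MvPolynomial (Fin 2) ℝ) (hf : f.IsHomogeneous d)
    (hf0 : f ≠ 0) :
    waringRank d f = sInf {m : ℕ | ∃ a b : Fin m → ℝ,
      (∀ i, (a i, b i) ≠ (0, 0)) ∧
      (∀ i j, i ≠ j → a i * b j ≠ a j * b i) ∧
      diffOp (∏ i, lin (a i) (b i)) f = 0} := by
  set S2 : Set ℕ := {m : ℕ | ∃ a b : Fin m → ℝ,
      (∀ i, (a i, b i) ≠ (0, 0)) ∧
      (∀ i j, i ≠ j → a i * b j ≠ a j * b i) ∧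
      diffOp (∏ i, lin (a i) (b i)) f = 0} with hS2
  have hne2 : (d + 1) ∈ S2 := by
    refine ⟨fun _ => 1, fun i => ((i : ℕ) : ℝ), ?_, ?_, ?_⟩
    · intro i h
      rw [Prod.mk.injEq] at h
      exact one_ne_zero h.1
    · intro i j hij h
      rw [one_mul, one_mul, Nat.cast_inj] at h
      exact hij (Fin.ext h.symm)
    · exact kill (d+1) d f _ _ hf (lt_add_one d)
  have hm₀mem : sInf S2 ∈ S2 := Nat.sInf_mem ⟨d + 1, hne2⟩
  obtain ⟨a, b, hnz, hnp, h0⟩ := hm₀mem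
  have hS1m₀ : hasWaringDecomp d (sInf S2) f := by
    obtain ⟨c, hc⟩ := apolar_decomp (sInf S2) d f a b
      (fun i h => hnz i (by rw [h.1, h.2])) hnp hf h0
    exact ⟨c, b, fun i => -(a i), hc⟩
  have hle1 : waringRank d f ≤ sInf S2 := Nat.sInf_le hS1m₀
  have hrmem : hasWaringDecomp d (waringRank d f) f := by
    have hne1 : {r | hasWaringDecomp d r f}.Nonempty := ⟨sInf S2, hS1m₀⟩
    simp only [waringRank]
    exact Nat.sInf_mem hne1
  apply le_antisymm hle1
  rcases Nat.eq_zero_or_pos d with rfl | hd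
  · -- d = 0
    have h1S2 : 1 ∈ S2 := by
      refine ⟨fun _ => 1, fun _ => 0, ?_, ?_, ?_⟩
      · intro i h
        rw [Prod.mk.injEq] at h
        exact one_ne_zero h.1
      · intro i j hij
        exact absurd (Subsingleton.elim i j) hij
      · exact kill 1 0 f _ _ hf Nat.zero_lt_one
    have hS1pos : 1 ≤ waringRank 0 f := by
      rw [Nat.one_le_iff_ne_zero]
      intro h
      rw [h] at hrmem
      obtain ⟨c', a', b', hsum⟩ := hrmem
      exact hf0 (by simpa using hsum)
    calc sInf S2 ≤ 1 := Nat.sInf_le h1S2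
      _ ≤ waringRank 0 f := hS1pos
  · -- d ≥ 1
    obtain ⟨m, hmr, c, α, β, hnz', hnp', hsum⟩ := reduce d hd (waringRank d f) f hrmem
    have hmS2 : m ∈ S2 := by
      refine ⟨β, fun i => -(α i), ?_, ?_, ?_⟩
      · intro i h
        rw [Prod.mk.injEq] at h
        dsimp only at h
        exact hnz' i ⟨by linarith [h.2], h.1⟩
      · intro i j hij h
        dsimp only at h
        exact hnp' i j hij (by linarith)
      · rw [hsum]
        exact ann m d c α β
    exact le_trans (Nat.sInf_le hmS2) hmr
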